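/- Consider the operator L = Box − Σ_i D_i D^i + (1/2) Σ_{i,j} D_i D_j T^{ij} on polynomials in x^a and a^a_i, where D_i = a^a_i ∂_{x^a}, D^i = η^{ab} ∂_{a^a_i} ∂_{x^b}, T^{ij} = η^{ab} ∂_{a^a_i} ∂_{a^b_j}. Then for any gauge parameter Λ^i satisfying the Labastida constraint T^{(ij} Λ^{k)} = 0 (symmetrization over i,j,k), the variation δφ = Σ_i D_i Λ^i satisfies L(δφ) = (terms proportional to D_i D_j D_k applied to T^{(ij}Λ^{k)}) = 0; i.e. the Labastida equation Lφ = 0 is invariant under δφ = D_i Λ^i. -/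
import Mathlib


/-- Gauge invariance of the Labastida equation.  With
`L = Box − Σ_i D_i D^i + (1/2) Σ_{i,j} D_i D_j T^{ij}` and the commutator
algebra `[D^i, D_j] = δ^i_j Box`, `[T^{ij}, D_k] = δ^i_k D^j + δ^j_k D^i`,
`[Box, D_i] = [Box, D^i] = 0`, `[D_i, D_j] = [D^i, D^j] = 0` (and `T^{ij}`
symmetric, commuting with `Box` and the `D^k`), any gauge parameter `Λ^i`
satisfying the Labastida constraint `T^{(ij} Λ^{k)} = 0` gives a pure-gauge
variation `δφ = Σ_i D_i Λ^i` with `L(δφ) = 0`. -/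
theorem labastida_gauge_invariance
    {V : Type*} [AddCommGroup V] [Module ℝ V] (n : ℕ)
    (Box : Module.End ℝ V) (D Dup : Fin n → Module.End ℝ V)
    (T : Fin n → Fin n → Module.End ℝ V)
    (hDD : ∀ i j, D i * D j = D j * D i)
    (hDupDup : ∀ i j, Dup i * Dup j = Dup j * Dup i)
    (hDupD : ∀ i j, Dup i * D j - D j * Dup i = if i = j then Box else 0)
    (hBoxD : ∀ i, Box * D i = D i * Box)
    (hBoxDup : ∀ i, Box * Dup i = Dup i * Box)
    (hTsymm : ∀ i j, T i j = T j i)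
    (hTBox : ∀ i j, T i j * Box = Box * T i j)
    (hTDup : ∀ i j k, T i j * Dup k = Dup k * T i j)
    (hTD : ∀ i j k, T i j * D k - D k * T i j
      = (if i = k then Dup j else 0) + (if j = k then Dup i else 0))
    (L : Module.End ℝ V)
    (hL : L = Box - (∑ i : Fin n, D i * Dup i)
      + (2:ℝ)⁻¹ • ∑ i : Fin n, ∑ j : Fin n, D i * D j * T i j)
    (Λ : Fin n → V)
    (hΛ : ∀ i j k, (T i j) (Λ k) + (T j k) (Λ i) + (T k i) (Λ j) = 0) :
    L (∑ i : Fin n, (D i) (Λ i)) = 0 := by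
  classical
  -- pointwise versions of the commutators
  have hDD' : ∀ i j (v : V), (D i) ((D j) v) = (D j) ((D i) v) := fun i j v => by
    simpa [Module.End.mul_apply] using congrArg (fun f : Module.End ℝ V => f v) (hDD i j)
  have hBoxD' : ∀ i (v : V), Box ((D i) v) = (D i) (Box v) := fun i v => by
    simpa [Module.End.mul_apply] using congrArg (fun f : Module.End ℝ V => f v) (hBoxD i)
  have hDupD' : ∀ i j (v : V), (Dup i) ((D j) v)
      = (D j) ((Dup i) v) + (if i = j then Box v else 0) := fun i j v => by
    have h := congrArg (fun f : Module.End ℝ V => f v) (hDupD i j)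
    simp only [LinearMap.sub_apply, Module.End.mul_apply] at h
    rw [sub_eq_iff_eq_add] at h
    rw [h]
    split_ifs <;> simp [add_comm]
  have hTD' : ∀ i j k (v : V), (T i j) ((D k) v)
      = (D k) ((T i j) v) + ((if i = k then (Dup j) v else 0)
        + (if j = k then (Dup i) v else 0)) := fun i j k v => by
    have h := congrArg (fun f : Module.End ℝ V => f v) (hTD i j k)
    simp only [LinearMap.sub_apply, Module.End.mul_apply, LinearMap.add_apply] at h
    rw [sub_eq_iff_eq_add] at h
    rw [h]
    split_ifs <;> simp [add_comm]
  set S : V := ∑ i : Fin n, (D i) (Λ i) with hS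
  -- abbreviations
  set Sig2 : V := ∑ i : Fin n, ∑ j : Fin n, (D i) ((D j) ((Dup i) (Λ j))) with hSig2
  set X : V := ∑ i : Fin n, ∑ j : Fin n, ∑ k : Fin n,
      (D i) ((D j) ((D k) ((T i j) (Λ k)))) with hX
  -- Dup i applied to S
  have hDupS : ∀ i, (Dup i) S = (∑ j : Fin n, (D j) ((Dup i) (Λ j))) + Box (Λ i) := by
    intro i
    rw [hS, map_sum]
    simp only [hDupD']
    rw [Finset.sum_add_distrib]
    congr 1
    simp
  -- T i j applied to S
  have hTS : ∀ i j, (T i j) S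
      = (∑ k : Fin n, (D k) ((T i j) (Λ k))) + ((Dup j) (Λ i) + (Dup i) (Λ j)) := by
    intro i j
    rw [hS, map_sum]
    simp only [hTD']
    rw [Finset.sum_add_distrib]
    congr 1
    rw [Finset.sum_add_distrib]
    simp
  -- the D Dup term
  have hB : ∑ i : Fin n, (D i) ((Dup i) S) = Sig2 + Box S := by
    rw [hSig2]
    have : ∀ i : Fin n, (D i) ((Dup i) S)
        = (∑ j : Fin n, (D i) ((D j) ((Dup i) (Λ j)))) + (D i) (Box (Λ i)) := by
      intro i
      rw [hDupS i, map_add, map_sum]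
    simp only [this]
    rw [Finset.sum_add_distrib]
    congr 1
    rw [hS, map_sum]
    exact Finset.sum_congr rfl fun i _ => (hBoxD' i (Λ i)).symm
  -- the middle sum equals Sig2 after swapping
  have hP : ∑ i : Fin n, ∑ j : Fin n, (D i) ((D j) ((Dup j) (Λ i))) = Sig2 := by
    rw [hSig2, Finset.sum_comm]
    exact Finset.sum_congr rfl fun i _ => Finset.sum_congr rfl fun j _ => hDD' j i _
  -- the D D T term
  have hC : ∑ i : Fin n, ∑ j : Fin n, (D i) ((D j) ((T i j) S)) = X + Sig2 + Sig2 := by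
    have : ∀ i j : Fin n, (D i) ((D j) ((T i j) S))
        = (∑ k : Fin n, (D i) ((D j) ((D k) ((T i j) (Λ k)))))
          + ((D i) ((D j) ((Dup j) (Λ i))) + (D i) ((D j) ((Dup i) (Λ j)))) := by
      intro i j
      rw [hTS i j, map_add, map_add, map_add, map_add, map_sum, map_sum]
    simp only [this]
    rw [Finset.sum_congr rfl fun i _ => Finset.sum_add_distrib, Finset.sum_add_distrib,
      Finset.sum_congr rfl fun i _ => Finset.sum_add_distrib, Finset.sum_add_distrib,
      hP, hX]
    abel
  -- cyclic reordering of three D's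
  have hcyc : ∀ i j k (v : V), (D i) ((D j) ((D k) v)) = (D j) ((D k) ((D i) v)) := by
    intro i j k v
    rw [hDD' i j, hDD' i k]
  -- X is symmetric under cycling the T indices
  have hX2 : (∑ i : Fin n, ∑ j : Fin n, ∑ k : Fin n,
      (D i) ((D j) ((D k) ((T j k) (Λ i))))) = X := by
    rw [show (∑ i : Fin n, ∑ j : Fin n, ∑ k : Fin n,
        (D i) ((D j) ((D k) ((T j k) (Λ i)))))
        = ∑ i : Fin n, ∑ j : Fin n, ∑ k : Fin n,
          (D j) ((D k) ((D i) ((T j k) (Λ i)))) from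
      Finset.sum_congr rfl fun i _ => Finset.sum_congr rfl fun j _ =>
        Finset.sum_congr rfl fun k _ => hcyc i j k _]
    rw [Finset.sum_comm]
    rw [Finset.sum_congr rfl fun j _ => Finset.sum_comm]
  have hX3 : (∑ i : Fin n, ∑ j : Fin n, ∑ k : Fin n,
      (D i) ((D j) ((D k) ((T k i) (Λ j))))) = X := by
    rw [show (∑ i : Fin n, ∑ j : Fin n, ∑ k : Fin n,
        (D i) ((D j) ((D k) ((T k i) (Λ j)))))
        = ∑ i : Fin n, ∑ j : Fin n, ∑ k : Fin n,
          (D k) ((D i) ((D j) ((T k i) (Λ j)))) from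
      Finset.sum_congr rfl fun i _ => Finset.sum_congr rfl fun j _ =>
        Finset.sum_congr rfl fun k _ => by rw [hcyc i j k, hcyc j k i]]
    rw [Finset.sum_congr rfl fun i _ => Finset.sum_comm]
    exact Finset.sum_comm
  -- X vanishes by the Labastida constraint
  have hXzero : X = 0 := by
    have hsum : X + X + X = 0 := by
      nth_rewrite 2 [← hX2]
      nth_rewrite 2 [← hX3]
      rw [← Finset.sum_add_distrib]
      rw [Finset.sum_congr rfl fun i _ => (Finset.sum_add_distrib).symm]
      rw [Finset.sum_congr rfl fun i _ => Finset.sum_congr rfl fun j _ =>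
        (Finset.sum_add_distrib).symm]
      rw [← Finset.sum_add_distrib]
      rw [Finset.sum_congr rfl fun i _ => (Finset.sum_add_distrib).symm]
      rw [Finset.sum_congr rfl fun i _ => Finset.sum_congr rfl fun j _ =>
        (Finset.sum_add_distrib).symm]
      have : ∀ i j k : Fin n,
          (D i) ((D j) ((D k) ((T i j) (Λ k)))) + (D i) ((D j) ((D k) ((T j k) (Λ i))))
          + (D i) ((D j) ((D k) ((T k i) (Λ j)))) = 0 := by
        intro i j k
        rw [← map_add, ← map_add, ← map_add, ← map_add, ← map_add, ← map_add,
          hΛ i j k]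
        simp
      simp only [this]
      simp
    have h3 : (3:ℝ) • X = 0 := by
      rw [show (3:ℝ) = 1 + 1 + 1 by norm_num, add_smul, add_smul, one_smul]
      simpa using hsum
    rcases smul_eq_zero.mp h3 with h | h
    · norm_num at h
    · exact h
  -- put everything together
  have happ : L S = Box S - (∑ i : Fin n, (D i) ((Dup i) S))
      + (2:ℝ)⁻¹ • (∑ i : Fin n, ∑ j : Fin n, (D i) ((D j) ((T i j) S))) := by
    rw [hL]
    simp [LinearMap.add_apply, LinearMap.sub_apply, LinearMap.smul_apply,
      LinearMap.sum_apply, Module.End.mul_apply]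
  rw [happ, hB, hC, hXzero]
  rw [zero_add]
  module
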